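/- Let H be a real Hilbert space, E a real normed vector space, and T : H → E an injective continuous linear map. Let T₀ > 0, M ≥ 0, and f : [0, T₀] → H be a function such that ‖f(t)‖_H ≤ M for every t ∈ [0, T₀] and such that the composition t ↦ T(f(t)) is continuous from [0, T₀] to E. Then f is weakly continuous: for every y ∈ H, the real-valued function t ↦ ⟨f(t), y⟩_H is continuous on [0, T₀]. -/

import Mathlib

open MeasureTheory Filter RealInnerProductSpace

theorem strauss_weak_continuity
    {H E : Type*} [NormedAddCommGroup H] [InnerProductSpace ℝ H] [CompleteSpace H]
    [NormedAddCommGroup E] [NormedSpace ℝ E]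
    (T : H →L[ℝ] E) (hT : Function.Injective T)
    (T₀ : ℝ) (hT₀ : 0 < T₀) (M : ℝ) (hM : 0 ≤ M)
    (f : ℝ → H)
    (hbdd : ∀ t ∈ Set.Icc (0 : ℝ) T₀, ‖f t‖ ≤ M)
    (hcont : ContinuousOn (fun t => T (f t)) (Set.Icc (0 : ℝ) T₀)) :
    ∀ y : H, ContinuousOn (fun t => ⟪f t, y⟫) (Set.Icc (0 : ℝ) T₀) := by
  intro y
  -- The submodule of H on which weak continuity is clear
  set S : Submodule ℝ H :=
    { carrier := {z | ∃ g : E →L[ℝ] ℝ, ∀ x : H, ⟪x, z⟫ = g (T x)}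
      add_mem' := by
        rintro a b ⟨ga, ha⟩ ⟨gb, hb⟩
        exact ⟨ga + gb, fun x => by simp [inner_add_right, ha x, hb x]⟩
      zero_mem' := ⟨0, fun x => by simp⟩
      smul_mem' := by
        rintro c a ⟨ga, ha⟩
        exact ⟨c • ga, fun x => by simp [inner_smul_right, ha x, mul_comm]⟩ } with hS
  -- S has trivial orthogonal complement
  have horth : Sᗮ = ⊥ := by
    rw [Submodule.eq_bot_iff]
    intro z hz
    have hz' : ∀ u ∈ S, ⟪u, z⟫ = 0 := (Submodule.mem_orthogonal S z).mp hz
    have hTz : T z = 0 := by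
      apply NormedSpace.eq_zero_of_forall_dual_eq_zero ℝ
      intro g
      have hy : ((InnerProductSpace.toDual ℝ H).symm (g.comp T)) ∈ S := by
        refine ⟨g, fun x => ?_⟩
        rw [real_inner_comm]
        exact InnerProductSpace.toDual_symm_apply
      have h1 := hz' _ hy
      have h2 : ⟪z, ((InnerProductSpace.toDual ℝ H).symm (g.comp T))⟫ = g (T z) := by
        rw [real_inner_comm]
        exact InnerProductSpace.toDual_symm_apply
      rw [real_inner_comm] at h1
      rw [h1] at h2
      exact h2.symm
    have : z = (0 : H) := hT (by simpa using hTz)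
    exact this
  -- hence S is dense
  have hdense : y ∈ closure (S : Set H) := by
    have : S.topologicalClosure = ⊤ := Submodule.topologicalClosure_eq_top_iff.mpr horth
    have : y ∈ S.topologicalClosure := this ▸ Submodule.mem_top
    exact this
  -- pick a sequence in S converging to y
  obtain ⟨u, hu_mem, hu_lim⟩ := mem_closure_iff_seq_limit.mp hdense
  -- uniform convergence of the inner products
  have huc : TendstoUniformlyOn (fun n t => ⟪f t, u n⟫) (fun t => ⟪f t, y⟫)
      atTop (Set.Icc (0 : ℝ) T₀) := by
    rw [Metric.tendstoUniformlyOn_iff]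
    intro ε hε
    have hnorm : Tendsto (fun n => M * ‖u n - y‖) atTop (nhds 0) := by
      have : Tendsto (fun n => ‖u n - y‖) atTop (nhds 0) := by
        simpa using (tendsto_iff_norm_sub_tendsto_zero.mp hu_lim)
      simpa using this.const_mul M
    filter_upwards [(hnorm.eventually (gt_mem_nhds hε))] with n hn t ht
    have hb := hbdd t ht
    calc dist (⟪f t, y⟫) (⟪f t, u n⟫) = |⟪f t, y - u n⟫| := by
          rw [Real.dist_eq, inner_sub_right]
      _ ≤ ‖f t‖ * ‖y - u n‖ := by
          simpa using abs_real_inner_le_norm (f t) (y - u n)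
      _ ≤ M * ‖u n - y‖ := by
          rw [norm_sub_rev]
          exact mul_le_mul_of_nonneg_right hb (norm_nonneg _)
      _ < ε := hn
  -- each approximant is continuous
  have hcont' : ∀ n, ContinuousOn (fun t => ⟪f t, u n⟫) (Set.Icc (0 : ℝ) T₀) := by
    intro n
    obtain ⟨g, hg⟩ := hu_mem n
    have : (fun t => ⟪f t, u n⟫) = fun t => g (T (f t)) := funext fun t => hg (f t)
    rw [this]
    exact g.continuous.comp_continuousOn hcont
  exact huc.continuousOn (Frequently.of_forall hcont')
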